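/- Let (W,S) be a Coxeter system, let v ∈ W, and let s ∈ S satisfy ℓ(vs) < ℓ(v). Let w be any reduced word for v and w' any reduced word for vs. Then for every u ∈ W: 𝓡_{u,w}(t) = 𝓡_{us,w'}(t) if ℓ(us) < ℓ(u), and 𝓡_{u,w}(t) = 𝓡_{us,w'}(t) + t·𝓡_{u,w'}(t) if ℓ(us) > ℓ(u). (That is, the diagrammatic R̃-polynomials of reduced words satisfy the classical Kazhdan–Lusztig recursion for R̃-polynomials.) -/

import Mathlib

open Polynomial

variable {B W : Type*} [Group W] {M : CoxeterMatrix B}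

open scoped Classical in
/-- The diagrammatic R̃-polynomial, defined by recursion on the word read from its last letter.
`dRAux cs ws u` where `ws` is the reversed word. -/
noncomputable def dRAux (cs : CoxeterSystem M W) : List B → W → Polynomial ℕ
  | [], u => if u = 1 then 1 else 0
  | s :: rest, u =>
      if cs.length (u * cs.simple s) < cs.length u then
        dRAux cs rest (u * cs.simple s)
      else
        dRAux cs rest (u * cs.simple s) + Polynomial.X * dRAux cs rest u

/-- The diagrammatic R̃-polynomial `𝓡_{u,w}(t) ∈ ℕ[t]`. -/
noncomputable def dR (cs : CoxeterSystem M W) (u : W) (w : List B) : Polynomial ℕ :=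
  dRAux cs w.reverse u

/-- `w` is a reduced word for `v`. -/
def IsReducedWordFor (cs : CoxeterSystem M W) (w : List B) (v : W) : Prop :=
  cs.wordProd w = v ∧ w.length = cs.length v

/-- Bruhat order via the subword property. -/
def BruhatLE (cs : CoxeterSystem M W) (u v : W) : Prop :=
  ∃ w w' : List B, IsReducedWordFor cs w v ∧ List.Sublist w' w ∧ IsReducedWordFor cs w' u

namespace KLRec

open CoxeterSystem

variable (cs : CoxeterSystem M W)

local prefix:100 "σ" => cs.simple
local prefix:100 "ℒ" => cs.length
local prefix:100 "π" => cs.wordProd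

open scoped Classical

/-! ### The Bourbaki permutation representation on `W × ZMod 2`. -/

noncomputable def eta (i : B) : Function.End (W × ZMod 2) :=
  fun x => (σ i * x.1 * σ i, x.2 + if x.1 = σ i then 1 else 0)

lemma end_pow_apply {X : Type*} (g : Function.End X) (k : ℕ) (x : X) :
    (g ^ (k + 1)) x = (g ^ k) (g x) := by
  rw [pow_succ]; rfl

lemma conj_eq_simple_iff (i j : B) (x : W) :
    σ j * x * σ j = σ i ↔ x = σ j * σ i * σ j := by
  constructor <;> intro h
  · rw [← h]; simp [mul_assoc]
  · rw [h]; simp [mul_assoc]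

noncomputable def Ff (i j : B) : ℕ → W → ZMod 2
  | 0, _ => 0
  | k+1, t => ((if t = σ j then 1 else 0) + (if t = σ j * σ i * σ j then 1 else 0)) +
      Ff i j k ((σ i * σ j) * t * (σ j * σ i))

lemma eta_pow (i j : B) (k : ℕ) (x : W × ZMod 2) :
    ((eta cs i * eta cs j) ^ k) x
      = ((σ i * σ j) ^ k * x.1 * (σ j * σ i) ^ k, x.2 + Ff cs i j k x.1) := by
  induction k generalizing x with
  | zero => rw [pow_zero]; show x = _; simp [Ff]
  | succ k ih =>
    rw [end_pow_apply]
    have hg : (eta cs i * eta cs j) x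
        = ((σ i * σ j) * x.1 * (σ j * σ i),
            x.2 + ((if x.1 = σ j then 1 else 0)
              + (if x.1 = σ j * σ i * σ j then 1 else 0))) := by
      show eta cs i (eta cs j x) = _
      simp only [eta]
      refine Prod.ext ?_ ?_
      · simp [mul_assoc]
      · simp only [conj_eq_simple_iff cs i j]
        ring
    rw [hg, ih]
    refine Prod.ext ?_ ?_
    · show _ = (σ i * σ j) ^ (k + 1) * x.1 * (σ j * σ i) ^ (k + 1)
      rw [pow_succ (σ i * σ j) k, pow_succ' (σ j * σ i) k]
      simp [mul_assoc]
    · simp only [Ff]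
      ring

lemma cond_shift (i j : B) (n : ℕ) (t : W) :
    (σ i * σ j) * t * (σ j * σ i) = σ j * (σ i * σ j) ^ n ↔
      t = σ j * (σ i * σ j) ^ (n + 2) := by
  have key : (σ i * σ j) * (σ j * (σ i * σ j) ^ (n + 2)) * (σ j * σ i)
      = σ j * (σ i * σ j) ^ n := by
    rw [show n + 2 = n + 1 + 1 by omega, pow_succ, pow_succ']
    simp [mul_assoc]
  constructor <;> intro h
  · have h2 : (σ i * σ j) * t * (σ j * σ i)
        = (σ i * σ j) * (σ j * (σ i * σ j) ^ (n + 2)) * (σ j * σ i) := by rw [h, key]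
    exact mul_left_cancel (mul_right_cancel h2)
  · rw [h, key]

lemma Ff_eq_sum (i j : B) (k : ℕ) (t : W) :
    Ff cs i j k t = ∑ n ∈ Finset.range (2 * k),
      (if t = σ j * (σ i * σ j) ^ n then (1 : ZMod 2) else 0) := by
  induction k generalizing t with
  | zero => simp [Ff]
  | succ k ih =>
    have h2k : 2 * (k + 1) = (2 * k + 1) + 1 := by ring
    rw [h2k, Finset.sum_range_succ', Finset.sum_range_succ']
    simp only [Ff, ih]
    simp only [cond_shift cs i j]
    have e0 : σ j * (σ i * σ j) ^ 0 = σ j := by simp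
    have e1 : σ j * (σ i * σ j) ^ (0 + 1) = σ j * σ i * σ j := by
      simp [mul_assoc]
    rw [e0, e1]
    have : ∀ n : ℕ, n + 1 + 1 = n + 2 := fun n => by omega
    simp only [this]
    ring

lemma eta_liftable : M.IsLiftable (fun i => eta cs i) := by
  intro i j
  funext x
  have hm := eta_pow cs i j (M i j) x
  rw [hm]
  have hp : (σ i * σ j) ^ M i j = 1 := cs.simple_mul_simple_pow i j
  have hq : (σ j * σ i) ^ M i j = 1 := cs.simple_mul_simple_pow' i j
  have hFf : Ff cs i j (M i j) x.1 = 0 := by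
    rw [Ff_eq_sum, two_mul, Finset.sum_range_add]
    have : ∀ n, (if x.1 = σ j * (σ i * σ j) ^ (M i j + n) then (1 : ZMod 2) else 0)
        = (if x.1 = σ j * (σ i * σ j) ^ n then (1 : ZMod 2) else 0) := by
      intro n
      rw [pow_add, hp, one_mul]
    simp only [this]
    exact CharTwo.add_self_eq_zero _
  rw [hp, hq, hFf]
  show _ = x
  refine Prod.ext ?_ ?_ <;> simp

noncomputable def theta : W →* Function.End (W × ZMod 2) :=
  cs.lift ⟨fun i => eta cs i, eta_liftable cs⟩

lemma theta_simple (i : B) : theta cs (σ i) = eta cs i :=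
  cs.lift_apply_simple (eta_liftable cs) i

/-! ### Counting function -/

noncomputable def cnt : List B → W → ZMod 2
  | [], _ => 0
  | i :: l, t => (if t = σ i then 1 else 0) + cnt l (σ i * t * σ i)

lemma theta_word (ω : List B) (t : W) (ε : ZMod 2) :
    theta cs (π ω)⁻¹ (t, ε) = ((π ω)⁻¹ * t * π ω, ε + cnt cs ω t) := by
  induction ω generalizing t ε with
  | nil =>
    simp only [wordProd_nil, inv_one, map_one, cnt, one_mul, mul_one, add_zero]
    rfl
  | cons i ω ih =>
    have hinv : (π (i :: ω))⁻¹ = (π ω)⁻¹ * σ i := by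
      rw [wordProd_cons, mul_inv_rev, inv_simple]
    rw [hinv, map_mul]
    show theta cs (π ω)⁻¹ (theta cs (σ i) (t, ε)) = _
    rw [theta_simple]
    show theta cs (π ω)⁻¹ (σ i * t * σ i, ε + if t = σ i then 1 else 0) = _
    rw [ih]
    refine Prod.ext ?_ ?_
    · simp [wordProd_cons, mul_inv_rev, mul_assoc]
    · simp [cnt]
      ring

lemma cnt_invariant {ω ω' : List B} (h : π ω = π ω') (t : W) :
    cnt cs ω t = cnt cs ω' t := by
  have h1 := theta_word cs ω t 0
  have h2 := theta_word cs ω' t 0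
  rw [h] at h1
  have h3 := congrArg Prod.snd (h1.symm.trans h2)
  simpa using h3

lemma cnt_append (a b : List B) (t : W) :
    cnt cs (a ++ b) t = cnt cs a t + cnt cs b ((π a)⁻¹ * t * π a) := by
  induction a generalizing t with
  | nil => simp [cnt]
  | cons i a ih =>
    show cnt cs (i :: (a ++ b)) t = _
    simp only [cnt, ih]
    have : (π (i :: a))⁻¹ * t * π (i :: a) = (π a)⁻¹ * (σ i * t * σ i) * π a := by
      rw [wordProd_cons, mul_inv_rev, inv_simple]
      simp [mul_assoc]
    rw [this]
    ring

lemma cnt_eq_zero (ω : List B) (hω : cs.IsReduced ω) (t : W)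
    (h : ℒ (π ω) < ℒ (t * π ω)) : cnt cs ω t = 0 := by
  induction ω generalizing t with
  | nil => simp [cnt]
  | cons i ω ih =>
    have hlen : ℒ (π (i :: ω)) = ω.length + 1 := by
      rw [hω]; simp
    have hωred : cs.IsReduced ω := by
      have := hω.drop 1
      simpa using this
    have hlenω : ℒ (π ω) = ω.length := hωred
    have htne : t ≠ σ i := by
      intro hti
      rw [hti, wordProd_cons, simple_mul_simple_cancel_left] at h
      have hlen2 : ℒ (σ i * π ω) = ω.length + 1 := by
        rw [← wordProd_cons]; exact hlen
      omega
    have hih : cnt cs ω (σ i * t * σ i) = 0 := by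
      apply ih hωred
      have he : σ i * t * σ i * π ω = σ i * (t * π (i :: ω)) := by
        rw [wordProd_cons]
        simp [mul_assoc]
      rw [he]
      rcases cs.length_simple_mul (t * π (i :: ω)) i with h' | h' <;> omega
    simp [cnt, htne, hih]

/-! ### The exchange-type lemma -/

lemma exchange_up {u : W} {i j : B}
    (hju : ℒ (σ j * u) = ℒ u + 1) (hui : ℒ (u * σ i) = ℒ u + 1)
    (hjui : ℒ (σ j * (u * σ i)) = ℒ u) :
    σ j * u = u * σ i := by
  obtain ⟨ω, hωred, hωu⟩ := cs.exists_reduced_word' u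
  have hπω' : π (ω ++ [i]) = u * σ i := by
    rw [wordProd_append, ← hωu]
    simp [wordProd_cons]
  have hω'red : cs.IsReduced (ω ++ [i]) := by
    show ℒ (π (ω ++ [i])) = _
    rw [hπω', hui]
    have : ℒ (π ω) = ω.length := hωred
    rw [← hωu] at this
    simp [← this]
  -- cnt over ω ++ [i] of σ j is 1
  have hone : cnt cs (ω ++ [i]) (σ j) = 1 := by
    -- σ j is a "descent" of u * σ i
    have hdesc : ℒ (σ j * π (ω ++ [i])) < ℒ (π (ω ++ [i])) := by
      rw [hπω', hjui, hui]; omega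
    obtain ⟨m, hmred, hmval⟩ := cs.exists_reduced_word' (σ j * (u * σ i))
    have hπjm : π (j :: m) = u * σ i := by
      rw [wordProd_cons, ← hmval, ← mul_assoc]
      simp [mul_assoc]
    have : cnt cs (ω ++ [i]) (σ j) = cnt cs (j :: m) (σ j) := by
      apply cnt_invariant
      rw [hπω', hπjm]
    rw [this]
    have hmzero : cnt cs m (σ j) = 0 := by
      apply cnt_eq_zero cs m hmred
      rw [← hmval]
      have : σ j * (σ j * (u * σ i)) = u * σ i := by simp [← mul_assoc]
      rw [this, hjui, hui]
      omega
    simp [cnt, hmzero]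
  have hzero : cnt cs ω (σ j) = 0 := by
    apply cnt_eq_zero cs ω hωred
    rw [← hωu, hju]
    omega
  rw [cnt_append, hzero, zero_add, ← hωu] at hone
  simp only [cnt] at hone
  by_cases hcond : u⁻¹ * σ j * u = σ i
  · have : σ j * u = u * (u⁻¹ * σ j * u) := by simp [← mul_assoc]
    rw [hcond] at this
    exact this
  · exfalso
    rw [if_neg hcond] at hone
    exact absurd hone (by decide)

lemma exchange_down {u : W} {i j : B}
    (hju : ℒ (σ j * u) + 1 = ℒ u) (hui : ℒ (u * σ i) + 1 = ℒ u)
    (hjui : ℒ (σ j * (u * σ i)) = ℒ u) :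
    σ j * u = u * σ i := by
  have h := exchange_up cs (u := σ j * u) (i := i) (j := j) ?_ ?_ ?_
  · -- h : σ j * (σ j * u) = (σ j * u) * σ i, i.e. u = σ j * u * σ i
    rw [simple_mul_simple_cancel_left] at h
    have h2 : σ j * u = σ j * (σ j * u * σ i) := by rw [← h]
    rw [mul_assoc, simple_mul_simple_cancel_left] at h2
    exact h2
  · rw [simple_mul_simple_cancel_left]
    omega
  · rw [mul_assoc, hjui]
    omega
  · rw [mul_assoc, simple_mul_simple_cancel_left]
    omega


/-! ### Hecke-type operators on `W → Polynomial ℤ` -/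

noncomputable def opA (i : B) (φ : W → Polynomial ℤ) : W → Polynomial ℤ :=
  fun u => if ℒ (u * σ i) < ℒ u then φ (u * σ i) else φ (u * σ i) + X * φ u

noncomputable def opB (j : B) (φ : W → Polynomial ℤ) : W → Polynomial ℤ :=
  fun u => if ℒ (σ j * u) < ℒ u then φ (σ j * u) else φ (σ j * u) + X * φ u

noncomputable def opC (i : B) (φ : W → Polynomial ℤ) : W → Polynomial ℤ :=
  fun u => opA cs i φ u - X * φ u

noncomputable def opD (j : B) (φ : W → Polynomial ℤ) : W → Polynomial ℤ :=
  fun u => opB cs j φ u - X * φ u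

lemma opA_sub (i : B) (φ ψ : W → Polynomial ℤ) (u : W) :
    opA cs i (fun v => φ v - X * ψ v) u = opA cs i φ u - X * opA cs i ψ u := by
  simp only [opA]
  split_ifs <;> ring

lemma opB_sub (j : B) (φ ψ : W → Polynomial ℤ) (u : W) :
    opB cs j (fun v => φ v - X * ψ v) u = opB cs j φ u - X * opB cs j ψ u := by
  simp only [opB]
  split_ifs <;> ring

lemma comm_AB (i j : B) (φ : W → Polynomial ℤ) :
    opA cs i (opB cs j φ) = opB cs j (opA cs i φ) := by
  funext u
  have Hb := cs.length_mul_simple u i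
  have Hc := cs.length_simple_mul u j
  have Hd1 := cs.length_simple_mul (u * σ i) j
  have Hd2 := cs.length_mul_simple (σ j * u) i
  rw [mul_assoc] at Hd2
  simp only [opA, opB, mul_assoc]
  split_ifs
  all_goals try ring
  all_goals try (exfalso; omega)
  all_goals (
    have hd : σ j * u = u * σ i := by
      rcases Hb with hb | hb <;> rcases Hc with hc | hc
      · exact exchange_up cs hc hb (by omega)
      · exfalso; omega
      · exfalso; omega
      · exact exchange_down cs hc hb (by omega)
    rw [hd]; try ring)

lemma comm_AD (i j : B) (φ : W → Polynomial ℤ) :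
    opA cs i (opD cs j φ) = opD cs j (opA cs i φ) := by
  funext u
  show opA cs i (fun v => opB cs j φ v - X * φ v) u = _
  rw [opA_sub]
  simp only [opD]
  rw [comm_AB]

lemma comm_CD (i j : B) (φ : W → Polynomial ℤ) :
    opC cs i (opD cs j φ) = opD cs j (opC cs i φ) := by
  funext u
  simp only [opC]
  have h1 : opA cs i (opD cs j φ) u = opD cs j (opA cs i φ) u := by rw [comm_AD]
  rw [h1]
  simp only [opD]
  have h2 : opB cs j (opC cs i φ) u = opB cs j (opA cs i φ) u - X * opB cs j φ u := by
    show opB cs j (fun v => opA cs i φ v - X * φ v) u = _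
    rw [opB_sub]
  rw [h2]
  simp only [opC]
  ring

lemma opAA (i : B) (φ : W → Polynomial ℤ) (u : W) :
    opA cs i (opA cs i φ) u = φ u + X * opA cs i φ u := by
  have Hb := cs.length_mul_simple u i
  have hne := cs.length_mul_simple_ne u i
  simp only [opA, simple_mul_simple_cancel_right]
  split_ifs
  all_goals try ring
  all_goals (exfalso; omega)

lemma opCA (i : B) (φ : W → Polynomial ℤ) : opC cs i (opA cs i φ) = φ := by
  funext u
  simp only [opC]
  rw [opAA]
  ring

lemma opAC (i : B) (φ : W → Polynomial ℤ) : opA cs i (opC cs i φ) = φ := by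
  funext u
  show opA cs i (fun v => opA cs i φ v - X * φ v) u = _
  rw [opA_sub, opAA]
  ring

/-! ### Sequences of operators -/

noncomputable def Aseq : List B → (W → Polynomial ℤ) → W → Polynomial ℤ
  | [], φ => φ
  | i :: l, φ => opA cs i (Aseq l φ)

noncomputable def Cseq : List B → (W → Polynomial ℤ) → W → Polynomial ℤ
  | [], φ => φ
  | i :: l, φ => opC cs i (Cseq l φ)

noncomputable def Dflip : List B → (W → Polynomial ℤ) → W → Polynomial ℤ
  | [], φ => φ
  | j :: l, φ => Dflip l (opD cs j φ)

lemma Aseq_append (a b : List B) (φ : W → Polynomial ℤ) :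
    Aseq cs (a ++ b) φ = Aseq cs a (Aseq cs b φ) := by
  induction a with
  | nil => rfl
  | cons i a ih =>
    rw [List.cons_append]
    show opA cs i (Aseq cs (a ++ b) φ) = opA cs i (Aseq cs a (Aseq cs b φ))
    rw [ih]

lemma Dflip_cons (j : B) (m : List B) (φ : W → Polynomial ℤ) :
    Dflip cs (j :: m) φ = Dflip cs m (opD cs j φ) := rfl

lemma opC_Dflip (m : List B) (i : B) (φ : W → Polynomial ℤ) :
    opC cs i (Dflip cs m φ) = Dflip cs m (opC cs i φ) := by
  induction m generalizing φ with
  | nil => rfl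
  | cons j m ih =>
    rw [Dflip_cons, Dflip_cons]
    rw [ih, comm_CD]

lemma Cseq_Dflip (w m : List B) (φ : W → Polynomial ℤ) :
    Cseq cs w (Dflip cs m φ) = Dflip cs m (Cseq cs w φ) := by
  induction w with
  | nil => rfl
  | cons i w ih =>
    show opC cs i (Cseq cs w (Dflip cs m φ)) = _
    rw [ih, opC_Dflip]
    rfl

lemma Dflip_eval (m : List B) (hm : cs.IsReduced m) (φ : W → Polynomial ℤ) :
    Dflip cs m φ 1 = φ (π m) := by
  induction m generalizing φ with
  | nil => simp [Dflip]
  | cons j m ih =>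
    have hmred : cs.IsReduced m := by
      have := hm.drop 1
      simpa using this
    have hlen : ℒ (π (j :: m)) = m.length + 1 := by rw [hm]; simp
    have hlenm : ℒ (π m) = m.length := hmred
    show Dflip cs m (opD cs j φ) 1 = _
    rw [ih hmred]
    simp only [opD, opB]
    rw [if_neg (by rw [← wordProd_cons]; omega)]
    rw [wordProd_cons]
    ring

lemma Cseq_eval (w : List B) (x : W) (φ : W → Polynomial ℤ)
    (h : ℒ (x * π w) = ℒ x + w.length) :
    Cseq cs w φ x = φ (x * π w) := by
  induction w generalizing x with
  | nil => simp [Cseq]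
  | cons i l ih =>
    have hx : x * π (i :: l) = x * σ i * π l := by
      rw [wordProd_cons, mul_assoc]
    have hxs : ℒ (x * σ i) = ℒ x + 1 := by
      rcases cs.length_mul_simple x i with h' | h'
      · exact h'
      · exfalso
        have h1 := cs.length_mul_le (x * σ i) (π l)
        have h2 := cs.length_wordProd_le l
        rw [hx] at h
        simp only [List.length_cons] at h
        omega
    show opC cs i (Cseq cs l φ) x = _
    simp only [opC, opA]
    rw [if_neg (by omega)]
    have hih : Cseq cs l φ (x * σ i) = φ (x * σ i * π l) := by
      apply ih
      rw [hx] at h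
      simp only [List.length_cons] at h
      omega
    rw [hih, hx]
    ring

lemma Cseq_key (w m : List B) (hw : cs.IsReduced w) (hm : cs.IsReduced m)
    (φ : W → Polynomial ℤ) :
    Cseq cs w φ (π m) = Dflip cs m φ (π w) := by
  have h1 : Dflip cs m (Cseq cs w φ) 1 = Cseq cs w φ (π m) :=
    Dflip_eval cs m hm _
  rw [← h1, ← Cseq_Dflip]
  have h2 : ℒ ((1 : W) * π w) = ℒ (1 : W) + w.length := by
    rw [one_mul, hw]
    simp
  rw [Cseq_eval cs w 1 _ h2, one_mul]

lemma Cseq_indep {w w₂ : List B} (hw : cs.IsReduced w) (hw₂ : cs.IsReduced w₂)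
    (h : π w = π w₂) (φ : W → Polynomial ℤ) :
    Cseq cs w φ = Cseq cs w₂ φ := by
  funext x
  obtain ⟨m, hm, hx⟩ := cs.exists_reduced_word' x
  rw [hx, Cseq_key cs w m hw hm, Cseq_key cs w₂ m hw₂ hm, h]

lemma Cseq_Aseq (l : List B) (φ : W → Polynomial ℤ) :
    Cseq cs l (Aseq cs l.reverse φ) = φ := by
  induction l generalizing φ with
  | nil => rfl
  | cons i l ih =>
    show opC cs i (Cseq cs l (Aseq cs (i :: l).reverse φ)) = φ
    have h : Aseq cs (i :: l).reverse φ = Aseq cs l.reverse (opA cs i φ) := by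
      rw [List.reverse_cons, Aseq_append]
      rfl
    rw [h, ih, opCA]

lemma Aseq_Cseq (l : List B) (φ : W → Polynomial ℤ) :
    Aseq cs l.reverse (Cseq cs l φ) = φ := by
  induction l generalizing φ with
  | nil => rfl
  | cons i l ih =>
    rw [List.reverse_cons, Aseq_append]
    have h : Aseq cs [i] (Cseq cs (i :: l) φ) = Cseq cs l φ := by
      show opA cs i (opC cs i (Cseq cs l φ)) = Cseq cs l φ
      rw [opAC]
    rw [h, ih]

lemma Aseq_indep {w w₂ : List B} (hw : cs.IsReduced w) (hw₂ : cs.IsReduced w₂)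
    (h : π w = π w₂) (φ : W → Polynomial ℤ) :
    Aseq cs w.reverse φ = Aseq cs w₂.reverse φ := by
  have h1 : φ = Cseq cs w₂ (Aseq cs w₂.reverse φ) := (Cseq_Aseq cs w₂ _).symm
  rw [Cseq_indep cs hw₂ hw h.symm] at h1
  calc Aseq cs w.reverse φ
      = Aseq cs w.reverse (Cseq cs w (Aseq cs w₂.reverse φ)) := by rw [← h1]
    _ = Aseq cs w₂.reverse φ := Aseq_Cseq cs w _


/-! ### Bridge to the natural-number diagrammatic R̃-polynomials -/

open scoped Classical in
noncomputable def delta1 : W → Polynomial ℤ := fun u => if u = 1 then 1 else 0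

lemma dRAux_map (l : List B) (u : W) :
    (dRAux cs l u).map (Nat.castRingHom ℤ) = Aseq cs l (delta1) u := by
  induction l generalizing u with
  | nil =>
    simp only [dRAux, Aseq, delta1]
    split_ifs <;> simp
  | cons i l ih =>
    simp only [dRAux, Aseq, opA]
    split_ifs with h
    · exact ih (u * σ i)
    · rw [Polynomial.map_add, Polynomial.map_mul, Polynomial.map_X, ih, ih]

lemma dR_indep {v : W} {w w₂ : List B} (hw : IsReducedWordFor cs w v)
    (hw₂ : IsReducedWordFor cs w₂ v) (u : W) : dR cs u w = dR cs u w₂ := by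
  obtain ⟨hπ1, hl1⟩ := hw
  obtain ⟨hπ2, hl2⟩ := hw₂
  have hwred : cs.IsReduced w := by
    show ℒ (π w) = w.length
    rw [hπ1]
    exact hl1.symm
  have hw₂red : cs.IsReduced w₂ := by
    show ℒ (π w₂) = w₂.length
    rw [hπ2]
    exact hl2.symm
  apply Polynomial.map_injective (Nat.castRingHom ℤ) Nat.cast_injective
  show (dRAux cs w.reverse u).map _ = (dRAux cs w₂.reverse u).map _
  rw [dRAux_map, dRAux_map, Aseq_indep cs hwred hw₂red (by rw [hπ1, hπ2])]

end KLRec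

/-- The diagrammatic R̃-polynomials of reduced words satisfy the classical Kazhdan–Lusztig
recursion for R̃-polynomials. -/
theorem dR_recursion (cs : CoxeterSystem M W) (v : W) (s : B)
    (hvs : cs.length (v * cs.simple s) < cs.length v)
    (w w' : List B) (hw : IsReducedWordFor cs w v)
    (hw' : IsReducedWordFor cs w' (v * cs.simple s)) (u : W) :
    (cs.length (u * cs.simple s) < cs.length u →
      dR cs u w = dR cs (u * cs.simple s) w') ∧
    (cs.length u < cs.length (u * cs.simple s) →
      dR cs u w = dR cs (u * cs.simple s) w' + Polynomial.X * dR cs u w') := by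
  have hlvs : cs.length (v * cs.simple s) + 1 = cs.length v := by
    rcases cs.length_mul_simple v s with h | h
    · omega
    · exact h
  have hw'' : IsReducedWordFor cs (w' ++ [s]) v := by
    obtain ⟨hπ', hl'⟩ := hw'
    constructor
    · rw [CoxeterSystem.wordProd_append, hπ']
      simp [CoxeterSystem.wordProd_cons]
    · simp only [List.length_append, List.length_cons, List.length_nil, hl']
      omega
  have hkey : dR cs u w = dR cs u (w' ++ [s]) := KLRec.dR_indep cs hw hw'' u
  have hrev : (w' ++ [s]).reverse = s :: w'.reverse := by simp
  constructor
  · intro h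
    rw [hkey]
    show dRAux cs (w' ++ [s]).reverse u = _
    rw [hrev]
    simp only [dRAux]
    rw [if_pos h]
    rfl
  · intro h
    rw [hkey]
    show dRAux cs (w' ++ [s]).reverse u = _
    rw [hrev]
    simp only [dRAux]
    rw [if_neg (by omega)]
    rfl
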